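/- Assume P is uniformly elliptic with constant α > 0 (ξ·P(x)ξ ≥ α|ξ|² for a.e. x ∈ Ω and all ξ ∈ ℝ^m), |r_k(x)| ≤ R_k a.e. on Ω with B = (Σ_k R_k²)^{1/2}, q1(x) ≥ α/2 + B²/(2α) for a.e. x ∈ Ω, and |q1(x)| ≤ Q1, |q2(x)| ≤ Q2 a.e. Then there exists a constant C ≥ 0, depending only on m, α, M, R_1,…,R_m, Q1 and Q2, with the following property: for all u1, u2, u1h, u2h, w1, w2 ∈ C¹_c(Ω) satisfying the Galerkin orthogonality relation a((u1 − u1h, u2 − u2h), (u1h − w1, u2h − w2)) = 0, one has ‖u1 − u1h‖₁² + ‖u2 − u2h‖₁² ≤ C (‖u1 − w1‖₁² + ‖u2 − w2‖₁²). -/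

import Mathlib

open MeasureTheory Matrix

/-- The gradient of `u : ℝ^m → ℝ` at `x`, as the vector of partial derivatives. -/
noncomputable def grad (m : ℕ) (u : (Fin m → ℝ) → ℝ) (x : Fin m → ℝ) : Fin m → ℝ :=
  fun i => fderiv ℝ u x (Pi.single i 1)


section aux
variable {m : ℕ} {μ : Measure (Fin m → ℝ)}

lemma grad_continuous {u : (Fin m → ℝ) → ℝ} (hu : ContDiff ℝ 1 u) (i : Fin m) :
    Continuous fun x => grad m u x i :=
  (hu.continuous_fderiv one_ne_zero).clm_apply continuous_const

lemma grad_hcs {u : (Fin m → ℝ) → ℝ} (hu : HasCompactSupport u) (i : Fin m) :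
    HasCompactSupport fun x => grad m u x i :=
  hu.fderiv_apply ℝ (Pi.single i 1)

lemma hcs_sub {u v : (Fin m → ℝ) → ℝ} (hu : HasCompactSupport u) (hv : HasCompactSupport v) :
    HasCompactSupport (u - v) := by
  rw [sub_eq_add_neg]
  exact hu.add (by simpa using hv.neg)

lemma grad_sub {u v : (Fin m → ℝ) → ℝ} (hu : ContDiff ℝ 1 u) (hv : ContDiff ℝ 1 v)
    (x : Fin m → ℝ) : grad m (u - v) x = grad m u x - grad m v x := by
  funext i
  have h : fderiv ℝ (fun y => u y - v y) x
      = fderiv ℝ u x - fderiv ℝ v x :=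
    fderiv_fun_sub (hu.differentiable one_ne_zero x) (hv.differentiable one_ne_zero x)
  simp only [grad, Pi.sub_apply]
  rw [show (u - v) = fun y => u y - v y from rfl, h]
  rfl

/-- measurable and a.e.-bounded. -/
def BddAE (μ : Measure (Fin m → ℝ)) (f : (Fin m → ℝ) → ℝ) : Prop :=
  AEStronglyMeasurable f μ ∧ ∃ C : ℝ, ∀ᵐ x ∂μ, |f x| ≤ C

namespace BddAE

lemma integrable [IsFiniteMeasure μ] {f : (Fin m → ℝ) → ℝ} (h : BddAE μ f) :
    Integrable f μ := by
  obtain ⟨hm, C, hC⟩ := h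
  exact (integrable_const C).mono' hm
    (by filter_upwards [hC] with x hx; simpa [Real.norm_eq_abs] using hx)

lemma mul {f g : (Fin m → ℝ) → ℝ} (hf : BddAE μ f) (hg : BddAE μ g) :
    BddAE μ fun x => f x * g x := by
  obtain ⟨hfm, Cf, hCf⟩ := hf
  obtain ⟨hgm, Cg, hCg⟩ := hg
  refine ⟨hfm.mul hgm, |Cf| * |Cg|, ?_⟩
  filter_upwards [hCf, hCg] with x h1 h2
  rw [abs_mul]
  exact mul_le_mul (h1.trans (le_abs_self _)) (h2.trans (le_abs_self _)) (abs_nonneg _)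
    (abs_nonneg _)

lemma add {f g : (Fin m → ℝ) → ℝ} (hf : BddAE μ f) (hg : BddAE μ g) :
    BddAE μ fun x => f x + g x := by
  obtain ⟨hfm, Cf, hCf⟩ := hf
  obtain ⟨hgm, Cg, hCg⟩ := hg
  refine ⟨hfm.add hgm, Cf + Cg, ?_⟩
  filter_upwards [hCf, hCg] with x h1 h2
  exact (abs_add_le _ _).trans (add_le_add h1 h2)

lemma sub {f g : (Fin m → ℝ) → ℝ} (hf : BddAE μ f) (hg : BddAE μ g) :
    BddAE μ fun x => f x - g x := by
  obtain ⟨hfm, Cf, hCf⟩ := hf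
  obtain ⟨hgm, Cg, hCg⟩ := hg
  refine ⟨hfm.sub hgm, Cf + Cg, ?_⟩
  filter_upwards [hCf, hCg] with x h1 h2
  exact (abs_sub _ _).trans (add_le_add h1 h2)

lemma sum {ι : Type*} (s : Finset ι) (f : ι → (Fin m → ℝ) → ℝ)
    (h : ∀ i ∈ s, BddAE μ (f i)) : BddAE μ fun x => ∑ i ∈ s, f i x := by
  classical
  induction s using Finset.cons_induction with
  | empty =>
      simp only [Finset.sum_empty]
      exact ⟨aestronglyMeasurable_const, 0, by simp⟩
  | cons a s ha ih =>
      simp only [Finset.sum_cons]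
      exact (h a (Finset.mem_cons_self a s)).add (ih fun i hi => h i (Finset.mem_cons_of_mem hi))

lemma of_cont {f : (Fin m → ℝ) → ℝ} (hc : Continuous f) (hs : HasCompactSupport f) :
    BddAE μ f := by
  obtain ⟨C, hC⟩ := hs.exists_bound_of_continuous hc
  exact ⟨hc.aestronglyMeasurable, C, ae_of_all _ fun x => by simpa using hC x⟩

lemma of_meas {f : (Fin m → ℝ) → ℝ} (hf : Measurable f) (C : ℝ)
    (h : ∀ᵐ x ∂μ, |f x| ≤ C) : BddAE μ f :=
  ⟨hf.aestronglyMeasurable, C, h⟩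

lemma dot {g h : (Fin m → ℝ) → Fin m → ℝ} (hg : ∀ i, BddAE μ fun x => g x i)
    (hh : ∀ i, BddAE μ fun x => h x i) : BddAE μ fun x => g x ⬝ᵥ h x := by
  simp only [dotProduct]
  exact sum _ _ fun i _ => (hg i).mul (hh i)

end BddAE

lemma bddAE_grad {u : (Fin m → ℝ) → ℝ} (hc : ContDiff ℝ 1 u) (hs : HasCompactSupport u)
    (i : Fin m) : BddAE μ fun x => grad m u x i :=
  BddAE.of_cont (grad_continuous hc i) (grad_hcs hs i)

/-- Generalized Young inequality. -/
lemma youngG {t X Y a b : ℝ} (hX : 0 ≤ X) (hY : 0 ≤ Y) (ha : 0 ≤ a) (hb : 0 ≤ b)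
    (hab : 1 ≤ 4 * a * b) (ht : t ^ 2 ≤ X * Y) : t ≤ a * X + b * Y := by
  have h1 : t ^ 2 ≤ (a * X + b * Y) ^ 2 := by
    nlinarith [sq_nonneg (a * X - b * Y),
      mul_nonneg (mul_nonneg hX hY) (by linarith : (0:ℝ) ≤ 4 * a * b - 1)]
  have h2 : 0 ≤ a * X + b * Y := add_nonneg (mul_nonneg ha hX) (mul_nonneg hb hY)
  calc t ≤ |t| := le_abs_self t
    _ = Real.sqrt (t ^ 2) := (Real.sqrt_sq_eq_abs t).symm
    _ ≤ Real.sqrt ((a * X + b * Y) ^ 2) := Real.sqrt_le_sqrt h1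
    _ = a * X + b * Y := by rw [Real.sqrt_sq h2]

lemma dotP_bound {A : Matrix (Fin m) (Fin m) ℝ} {M : ℝ} (hM : 0 ≤ M)
    (hA : ∀ i j, |A i j| ≤ M) (g h : Fin m → ℝ) :
    (g ⬝ᵥ A.mulVec h) ^ 2 ≤ (M ^ 2 * (m : ℝ) ^ 2) * ((∑ i, g i ^ 2) * (∑ j, h j ^ 2)) := by
  have habs : |g ⬝ᵥ A.mulVec h| ≤ M * (∑ i, |g i|) * (∑ j, |h j|) := by
    simp only [dotProduct, mulVec]
    calc |∑ i, g i * ∑ j, A i j * h j| ≤ ∑ i, |g i * ∑ j, A i j * h j| :=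
          Finset.abs_sum_le_sum_abs _ _
      _ ≤ ∑ i, |g i| * (M * ∑ j, |h j|) := by
          refine Finset.sum_le_sum fun i _ => ?_
          rw [abs_mul]
          refine mul_le_mul_of_nonneg_left ?_ (abs_nonneg _)
          calc |∑ j, A i j * h j| ≤ ∑ j, |A i j * h j| := Finset.abs_sum_le_sum_abs _ _
            _ ≤ ∑ j, M * |h j| := by
                refine Finset.sum_le_sum fun j _ => ?_
                rw [abs_mul]
                exact mul_le_mul_of_nonneg_right (hA i j) (abs_nonneg _)
            _ = M * ∑ j, |h j| := by rw [Finset.mul_sum]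
      _ = M * (∑ i, |g i|) * (∑ j, |h j|) := by rw [← Finset.sum_mul]; ring
  have hg2 : (∑ i, |g i|) ^ 2 ≤ (m : ℝ) * ∑ i, g i ^ 2 := by
    have := Finset.sum_mul_sq_le_sq_mul_sq Finset.univ (fun _ : Fin m => (1 : ℝ)) (fun i => |g i|)
    simpa [sq_abs] using this
  have hh2 : (∑ j, |h j|) ^ 2 ≤ (m : ℝ) * ∑ j, h j ^ 2 := by
    have := Finset.sum_mul_sq_le_sq_mul_sq Finset.univ (fun _ : Fin m => (1 : ℝ)) (fun j => |h j|)
    simpa [sq_abs] using this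
  have h0g : (0:ℝ) ≤ ∑ i, |g i| := Finset.sum_nonneg fun i _ => abs_nonneg _
  have h0h : (0:ℝ) ≤ ∑ j, |h j| := Finset.sum_nonneg fun j _ => abs_nonneg _
  calc (g ⬝ᵥ A.mulVec h) ^ 2 = |g ⬝ᵥ A.mulVec h| ^ 2 := (sq_abs _).symm
    _ ≤ (M * (∑ i, |g i|) * (∑ j, |h j|)) ^ 2 := by
        refine pow_le_pow_left₀ (abs_nonneg _) habs 2
    _ = M ^ 2 * ((∑ i, |g i|) ^ 2 * (∑ j, |h j|) ^ 2) := by ring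
    _ ≤ M ^ 2 * (((m : ℝ) * ∑ i, g i ^ 2) * ((m : ℝ) * ∑ j, h j ^ 2)) := by
        refine mul_le_mul_of_nonneg_left ?_ (sq_nonneg M)
        exact mul_le_mul hg2 hh2 (sq_nonneg _) (by positivity)
    _ = (M ^ 2 * (m : ℝ) ^ 2) * ((∑ i, g i ^ 2) * (∑ j, h j ^ 2)) := by ring

lemma dotR_sq {Rv g R : Fin m → ℝ} (hR : ∀ k, |Rv k| ≤ R k) :
    (Rv ⬝ᵥ g) ^ 2 ≤ (∑ k, R k ^ 2) * (∑ k, g k ^ 2) := by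
  have h1 : (Rv ⬝ᵥ g) ^ 2 ≤ (∑ k, Rv k ^ 2) * (∑ k, g k ^ 2) := by
    simpa [dotProduct] using Finset.sum_mul_sq_le_sq_mul_sq Finset.univ Rv g
  refine h1.trans (mul_le_mul_of_nonneg_right ?_ (Finset.sum_nonneg fun k _ => sq_nonneg _))
  refine Finset.sum_le_sum fun k _ => ?_
  calc Rv k ^ 2 = |Rv k| ^ 2 := (sq_abs _).symm
    _ ≤ R k ^ 2 := pow_le_pow_left₀ (abs_nonneg _) (hR k) 2

lemma sq_coef {q Q u v : ℝ} (h : |q| ≤ Q) : (q * u * v) ^ 2 ≤ u ^ 2 * (Q ^ 2 * v ^ 2) := by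
  have hq2 : q ^ 2 ≤ Q ^ 2 := by
    calc q ^ 2 = |q| ^ 2 := (sq_abs _).symm
      _ ≤ Q ^ 2 := pow_le_pow_left₀ (abs_nonneg _) h 2
  calc (q * u * v) ^ 2 = q ^ 2 * (u * v) ^ 2 := by ring
    _ ≤ Q ^ 2 * (u * v) ^ 2 := mul_le_mul_of_nonneg_right hq2 (sq_nonneg _)
    _ = u ^ 2 * (Q ^ 2 * v ^ 2) := by ring

end aux


/-- `u ∈ C¹_c(Ω)`: continuously differentiable with compact support contained in `Ω`. -/
def C1c (m : ℕ) (Ω : Set (Fin m → ℝ)) (u : (Fin m → ℝ) → ℝ) : Prop :=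
  ContDiff ℝ 1 u ∧ HasCompactSupport u ∧ tsupport u ⊆ Ω

/-- `‖u‖₀ = (∫_Ω u²)^(1/2)`. -/
noncomputable def normL2 (m : ℕ) (Ω : Set (Fin m → ℝ)) (u : (Fin m → ℝ) → ℝ) : ℝ :=
  Real.sqrt (∫ x in Ω, (u x) ^ 2)

/-- `|u|₁ = (∫_Ω |∇u|²)^(1/2)`. -/
noncomputable def semiH1 (m : ℕ) (Ω : Set (Fin m → ℝ)) (u : (Fin m → ℝ) → ℝ) : ℝ :=
  Real.sqrt (∫ x in Ω, ∑ i, (grad m u x i) ^ 2)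

/-- `‖u‖₁ = (‖u‖₀² + |u|₁²)^(1/2)`. -/
noncomputable def normH1 (m : ℕ) (Ω : Set (Fin m → ℝ)) (u : (Fin m → ℝ) → ℝ) : ℝ :=
  Real.sqrt ((normL2 m Ω u) ^ 2 + (semiH1 m Ω u) ^ 2)

/-- The bilinear form of the coupled elliptic system:
`a(u,v) = ∫_Ω [∇v1·P∇u1 + ∇v2·P∇u2] + ∫_Ω [v1 (R·∇u1) + v2 (R·∇u2)]
        + ∫_Ω [q1 u1 v1 + q2 u2 v1 + q1 u2 v2 − q2 u1 v2]`. -/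
noncomputable def aForm (m : ℕ) (Ω : Set (Fin m → ℝ))
    (P : (Fin m → ℝ) → Matrix (Fin m) (Fin m) ℝ)
    (Rv : (Fin m → ℝ) → Fin m → ℝ) (q1 q2 : (Fin m → ℝ) → ℝ)
    (u1 u2 v1 v2 : (Fin m → ℝ) → ℝ) : ℝ :=
  (∫ x in Ω, (grad m v1 x ⬝ᵥ (P x).mulVec (grad m u1 x)
      + grad m v2 x ⬝ᵥ (P x).mulVec (grad m u2 x)))
  + (∫ x in Ω, (v1 x * (Rv x ⬝ᵥ grad m u1 x) + v2 x * (Rv x ⬝ᵥ grad m u2 x)))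
  + (∫ x in Ω, (q1 x * u1 x * v1 x + q2 x * u2 x * v1 x
      + q1 x * u2 x * v2 x - q2 x * u1 x * v2 x))

set_option maxHeartbeats 1600000 in
theorem stmt7 (m : ℕ) (hm : 1 ≤ m) (α : ℝ) (hα : 0 < α) (M : ℝ) (R : Fin m → ℝ)
    (Q1 Q2 : ℝ) (B : ℝ) (hB : B = Real.sqrt (∑ k, (R k) ^ 2)) :
    ∃ C : ℝ, 0 ≤ C ∧
      ∀ (Ω : Set (Fin m → ℝ)), IsOpen Ω → Bornology.IsBounded Ω →
      ∀ (P : (Fin m → ℝ) → Matrix (Fin m) (Fin m) ℝ),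
        (∀ i j, Measurable fun x => P x i j) →
        (∀ᵐ x ∂(volume.restrict Ω), ∀ i j, |P x i j| ≤ M) →
        (∀ᵐ x ∂(volume.restrict Ω), (P x).IsSymm) →
        (∀ᵐ x ∂(volume.restrict Ω), ∀ ξ : Fin m → ℝ,
          α * ∑ i, (ξ i) ^ 2 ≤ ξ ⬝ᵥ (P x).mulVec ξ) →
      ∀ (Rv : (Fin m → ℝ) → Fin m → ℝ),
        (∀ k, Measurable fun x => Rv x k) →
        (∀ᵐ x ∂(volume.restrict Ω), ∀ k, |Rv x k| ≤ R k) →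
      ∀ (q1 q2 : (Fin m → ℝ) → ℝ), Measurable q1 → Measurable q2 →
        (∀ᵐ x ∂(volume.restrict Ω), |q1 x| ≤ Q1) →
        (∀ᵐ x ∂(volume.restrict Ω), |q2 x| ≤ Q2) →
        (∀ᵐ x ∂(volume.restrict Ω), α / 2 + B ^ 2 / (2 * α) ≤ q1 x) →
      ∀ u1 u2 u1h u2h w1 w2 : (Fin m → ℝ) → ℝ,
        C1c m Ω u1 → C1c m Ω u2 → C1c m Ω u1h → C1c m Ω u2h →
        C1c m Ω w1 → C1c m Ω w2 →
        aForm m Ω P Rv q1 q2 (u1 - u1h) (u2 - u2h) (u1h - w1) (u2h - w2) = 0 →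
        (normH1 m Ω (u1 - u1h)) ^ 2 + (normH1 m Ω (u2 - u2h)) ^ 2 ≤
          C * ((normH1 m Ω (u1 - w1)) ^ 2 + (normH1 m Ω (u2 - w2)) ^ 2) := by
  classical
  have hB2 : B ^ 2 = ∑ k, R k ^ 2 := by
    rw [hB, Real.sq_sqrt (Finset.sum_nonneg fun k _ => sq_nonneg _)]
  set K : ℝ := (4 / α) * (M ^ 2 * (m : ℝ) ^ 2 + B ^ 2 + Q1 ^ 2 + Q2 ^ 2) with hK
  have hK0 : 0 ≤ K := by positivity
  refine ⟨8 / (3 * α) * K, by positivity, ?_⟩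
  intro Ω hΩo hΩb P hPmeas hPbd hPsymm hPell Rv hRmeas hRbd q1 q2 hq1m hq2m hq1b hq2b hq1low
  intro u1 u2 u1h u2h w1 w2 hu1 hu2 hu1h hu2h hw1 hw2 hGal
  haveI : IsFiniteMeasure (volume.restrict Ω) :=
    ⟨by rw [Measure.restrict_apply_univ]; exact hΩb.measure_lt_top⟩
  obtain ⟨hu1c, hu1s, -⟩ := hu1
  obtain ⟨hu2c, hu2s, -⟩ := hu2
  obtain ⟨hu1hc, hu1hs, -⟩ := hu1h
  obtain ⟨hu2hc, hu2hs, -⟩ := hu2h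
  obtain ⟨hw1c, hw1s, -⟩ := hw1
  obtain ⟨hw2c, hw2s, -⟩ := hw2
  set e1 := u1 - u1h with he1
  set e2 := u2 - u2h with he2
  set z1 := u1 - w1 with hz1
  set z2 := u2 - w2 with hz2
  have he1c : ContDiff ℝ 1 e1 := hu1c.sub hu1hc
  have he2c : ContDiff ℝ 1 e2 := hu2c.sub hu2hc
  have hz1c : ContDiff ℝ 1 z1 := hu1c.sub hw1c
  have hz2c : ContDiff ℝ 1 z2 := hu2c.sub hw2c
  have he1s : HasCompactSupport e1 := hcs_sub hu1s hu1hs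
  have he2s : HasCompactSupport e2 := hcs_sub hu2s hu2hs
  have hz1s : HasCompactSupport z1 := hcs_sub hu1s hw1s
  have hz2s : HasCompactSupport z2 := hcs_sub hu2s hw2s
  -- basic bounded-measurable facts
  have bP : ∀ i j, BddAE (volume.restrict Ω) fun x => P x i j := fun i j =>
    BddAE.of_meas (hPmeas i j) M (by filter_upwards [hPbd] with x h using h i j)
  have bR : ∀ k, BddAE (volume.restrict Ω) fun x => Rv x k := fun k =>
    BddAE.of_meas (hRmeas k) (R k) (by filter_upwards [hRbd] with x h using h k)
  have bq1 : BddAE (volume.restrict Ω) q1 := BddAE.of_meas hq1m Q1 hq1b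
  have bq2 : BddAE (volume.restrict Ω) q2 := BddAE.of_meas hq2m Q2 hq2b
  have bdry : ∀ u : (Fin m → ℝ) → ℝ, ContDiff ℝ 1 u → HasCompactSupport u →
      BddAE (volume.restrict Ω) u := fun u hc hs => BddAE.of_cont hc.continuous hs
  have bsq : ∀ f : (Fin m → ℝ) → ℝ, BddAE (volume.restrict Ω) f →
      BddAE (volume.restrict Ω) fun x => f x ^ 2 := by
    intro f h
    have := h.mul h
    simpa [pow_two] using this
  have bgr2 : ∀ u : (Fin m → ℝ) → ℝ, ContDiff ℝ 1 u → HasCompactSupport u →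
      BddAE (volume.restrict Ω) fun x => ∑ i, grad m u x i ^ 2 :=
    fun u hc hs => BddAE.sum _ _ fun i _ => bsq _ (bddAE_grad hc hs i)
  -- boundedness of the integrands
  have bPhiP : ∀ a1 a2 b1 b2 : (Fin m → ℝ) → ℝ,
      ContDiff ℝ 1 a1 → HasCompactSupport a1 → ContDiff ℝ 1 a2 → HasCompactSupport a2 →
      ContDiff ℝ 1 b1 → HasCompactSupport b1 → ContDiff ℝ 1 b2 → HasCompactSupport b2 →
      BddAE (volume.restrict Ω) fun x => grad m b1 x ⬝ᵥ (P x).mulVec (grad m a1 x)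
        + grad m b2 x ⬝ᵥ (P x).mulVec (grad m a2 x) := by
    intro a1 a2 b1 b2 ha1c ha1s ha2c ha2s hb1c hb1s hb2c hb2s
    have hmv : ∀ (a : (Fin m → ℝ) → ℝ), ContDiff ℝ 1 a → HasCompactSupport a → ∀ i : Fin m,
        BddAE (volume.restrict Ω) fun x => (P x).mulVec (grad m a x) i := by
      intro a hc hs i
      show BddAE (volume.restrict Ω) fun x => (fun j => P x i j) ⬝ᵥ grad m a x
      exact BddAE.dot (fun j => bP i j) (bddAE_grad hc hs)
    exact (BddAE.dot (bddAE_grad hb1c hb1s) (hmv a1 ha1c ha1s)).add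
      (BddAE.dot (bddAE_grad hb2c hb2s) (hmv a2 ha2c ha2s))
  have bPhiR : ∀ a1 a2 b1 b2 : (Fin m → ℝ) → ℝ,
      ContDiff ℝ 1 a1 → HasCompactSupport a1 → ContDiff ℝ 1 a2 → HasCompactSupport a2 →
      ContDiff ℝ 1 b1 → HasCompactSupport b1 → ContDiff ℝ 1 b2 → HasCompactSupport b2 →
      BddAE (volume.restrict Ω) fun x => b1 x * (Rv x ⬝ᵥ grad m a1 x)
        + b2 x * (Rv x ⬝ᵥ grad m a2 x) := by
    intro a1 a2 b1 b2 ha1c ha1s ha2c ha2s hb1c hb1s hb2c hb2s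
    exact ((bdry b1 hb1c hb1s).mul (BddAE.dot bR (bddAE_grad ha1c ha1s))).add
      ((bdry b2 hb2c hb2s).mul (BddAE.dot bR (bddAE_grad ha2c ha2s)))
  have bPhiQ : ∀ a1 a2 b1 b2 : (Fin m → ℝ) → ℝ,
      ContDiff ℝ 1 a1 → HasCompactSupport a1 → ContDiff ℝ 1 a2 → HasCompactSupport a2 →
      ContDiff ℝ 1 b1 → HasCompactSupport b1 → ContDiff ℝ 1 b2 → HasCompactSupport b2 →
      BddAE (volume.restrict Ω) fun x => q1 x * a1 x * b1 x + q2 x * a2 x * b1 x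
        + q1 x * a2 x * b2 x - q2 x * a1 x * b2 x := by
    intro a1 a2 b1 b2 ha1c ha1s ha2c ha2s hb1c hb1s hb2c hb2s
    exact ((((bq1.mul (bdry a1 ha1c ha1s)).mul (bdry b1 hb1c hb1s)).add
      ((bq2.mul (bdry a2 ha2c ha2s)).mul (bdry b1 hb1c hb1s))).add
      ((bq1.mul (bdry a2 ha2c ha2s)).mul (bdry b2 hb2c hb2s))).sub
      ((bq2.mul (bdry a1 ha1c ha1s)).mul (bdry b2 hb2c hb2s))
  have bEE : ∀ a1 a2 : (Fin m → ℝ) → ℝ,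
      ContDiff ℝ 1 a1 → HasCompactSupport a1 → ContDiff ℝ 1 a2 → HasCompactSupport a2 →
      BddAE (volume.restrict Ω) fun x => a1 x ^ 2 + a2 x ^ 2
        + (∑ i, grad m a1 x i ^ 2) + ∑ i, grad m a2 x i ^ 2 := by
    intro a1 a2 ha1c ha1s ha2c ha2s
    exact (((bsq _ (bdry a1 ha1c ha1s)).add (bsq _ (bdry a2 ha2c ha2s))).add
      (bgr2 _ ha1c ha1s)).add (bgr2 _ ha2c ha2s)
  -- integrability
  have iPee := (bPhiP e1 e2 e1 e2 he1c he1s he2c he2s he1c he1s he2c he2s).integrable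
  have iPez := (bPhiP e1 e2 z1 z2 he1c he1s he2c he2s hz1c hz1s hz2c hz2s).integrable
  have iRee := (bPhiR e1 e2 e1 e2 he1c he1s he2c he2s he1c he1s he2c he2s).integrable
  have iRez := (bPhiR e1 e2 z1 z2 he1c he1s he2c he2s hz1c hz1s hz2c hz2s).integrable
  have iQee := (bPhiQ e1 e2 e1 e2 he1c he1s he2c he2s he1c he1s he2c he2s).integrable
  have iQez := (bPhiQ e1 e2 z1 z2 he1c he1s he2c he2s hz1c hz1s hz2c hz2s).integrable
  have iEe := (bEE e1 e2 he1c he1s he2c he2s).integrable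
  have iEz := (bEE z1 z2 hz1c hz1s hz2c hz2s).integrable
  -- Galerkin orthogonality ⇒ a(e,e) = a(e,z)
  have hv1 : u1h - w1 = z1 - e1 := by rw [hz1, he1]; ring
  have hv2 : u2h - w2 = z2 - e2 := by rw [hz2, he2]; ring
  rw [hv1, hv2] at hGal
  have hsplit : aForm m Ω P Rv q1 q2 e1 e2 (z1 - e1) (z2 - e2)
      = aForm m Ω P Rv q1 q2 e1 e2 z1 z2 - aForm m Ω P Rv q1 q2 e1 e2 e1 e2 := by
    simp only [aForm]
    have h1 : (∫ x in Ω, (grad m (z1 - e1) x ⬝ᵥ (P x).mulVec (grad m e1 x)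
          + grad m (z2 - e2) x ⬝ᵥ (P x).mulVec (grad m e2 x)))
        = (∫ x in Ω, (grad m z1 x ⬝ᵥ (P x).mulVec (grad m e1 x)
          + grad m z2 x ⬝ᵥ (P x).mulVec (grad m e2 x)))
        - ∫ x in Ω, (grad m e1 x ⬝ᵥ (P x).mulVec (grad m e1 x)
          + grad m e2 x ⬝ᵥ (P x).mulVec (grad m e2 x)) := by
      rw [← integral_sub iPez iPee]
      refine integral_congr_ae (ae_of_all _ fun x => ?_)
      simp only [grad_sub hz1c he1c, grad_sub hz2c he2c, sub_dotProduct, Pi.sub_apply]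
      ring
    have h2 : (∫ x in Ω, ((z1 - e1) x * (Rv x ⬝ᵥ grad m e1 x)
          + (z2 - e2) x * (Rv x ⬝ᵥ grad m e2 x)))
        = (∫ x in Ω, (z1 x * (Rv x ⬝ᵥ grad m e1 x) + z2 x * (Rv x ⬝ᵥ grad m e2 x)))
        - ∫ x in Ω, (e1 x * (Rv x ⬝ᵥ grad m e1 x) + e2 x * (Rv x ⬝ᵥ grad m e2 x)) := by
      rw [← integral_sub iRez iRee]
      refine integral_congr_ae (ae_of_all _ fun x => ?_)
      simp only [Pi.sub_apply]
      ring
    have h3 : (∫ x in Ω, (q1 x * e1 x * (z1 - e1) x + q2 x * e2 x * (z1 - e1) x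
          + q1 x * e2 x * (z2 - e2) x - q2 x * e1 x * (z2 - e2) x))
        = (∫ x in Ω, (q1 x * e1 x * z1 x + q2 x * e2 x * z1 x
          + q1 x * e2 x * z2 x - q2 x * e1 x * z2 x))
        - ∫ x in Ω, (q1 x * e1 x * e1 x + q2 x * e2 x * e1 x
          + q1 x * e2 x * e2 x - q2 x * e1 x * e2 x) := by
      rw [← integral_sub iQez iQee]
      refine integral_congr_ae (ae_of_all _ fun x => ?_)
      simp only [Pi.sub_apply]
      ring
    rw [h1, h2, h3]
    ring
  have hEq : aForm m Ω P Rv q1 q2 e1 e2 e1 e2 = aForm m Ω P Rv q1 q2 e1 e2 z1 z2 := by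
    rw [hsplit] at hGal
    linarith
  -- coercivity
  have hcoer : α / 2 * (∫ x in Ω, (e1 x ^ 2 + e2 x ^ 2
        + (∑ i, grad m e1 x i ^ 2) + ∑ i, grad m e2 x i ^ 2))
      ≤ aForm m Ω P Rv q1 q2 e1 e2 e1 e2 := by
    simp only [aForm]
    have iPRee : Integrable (fun x => (grad m e1 x ⬝ᵥ (P x).mulVec (grad m e1 x)
        + grad m e2 x ⬝ᵥ (P x).mulVec (grad m e2 x))
        + (e1 x * (Rv x ⬝ᵥ grad m e1 x) + e2 x * (Rv x ⬝ᵥ grad m e2 x)))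
        (volume.restrict Ω) := iPee.add iRee
    have iFull : Integrable (fun x => (grad m e1 x ⬝ᵥ (P x).mulVec (grad m e1 x)
        + grad m e2 x ⬝ᵥ (P x).mulVec (grad m e2 x))
        + (e1 x * (Rv x ⬝ᵥ grad m e1 x) + e2 x * (Rv x ⬝ᵥ grad m e2 x))
        + (q1 x * e1 x * e1 x + q2 x * e2 x * e1 x
          + q1 x * e2 x * e2 x - q2 x * e1 x * e2 x))
        (volume.restrict Ω) := iPRee.add iQee
    rw [← integral_add iPee iRee, ← integral_add iPRee iQee, ← integral_const_mul]
    refine integral_mono_ae (iEe.const_mul _) iFull ?_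
    filter_upwards [hPell, hRbd, hq1low] with x hell hRx hq1x
    have hSA : (0:ℝ) ≤ ∑ i, grad m e1 x i ^ 2 := Finset.sum_nonneg fun i _ => sq_nonneg _
    have hSB : (0:ℝ) ≤ ∑ i, grad m e2 x i ^ 2 := Finset.sum_nonneg fun i _ => sq_nonneg _
    have hPa := hell (grad m e1 x)
    have hPb := hell (grad m e2 x)
    have hra : (Rv x ⬝ᵥ grad m e1 x) ^ 2 ≤ B ^ 2 * ∑ i, grad m e1 x i ^ 2 := by
      rw [hB2]; exact dotR_sq hRx
    have hrb : (Rv x ⬝ᵥ grad m e2 x) ^ 2 ≤ B ^ 2 * ∑ i, grad m e2 x i ^ 2 := by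
      rw [hB2]; exact dotR_sq hRx
    have hab : (1:ℝ) ≤ 4 * (α / 2) * (1 / (2 * α)) := by
      have h : (4:ℝ) * (α / 2) * (1 / (2 * α)) = 1 := by
        field_simp
        ring
      linarith
    have ht3 : -(e1 x * (Rv x ⬝ᵥ grad m e1 x))
        ≤ α / 2 * (∑ i, grad m e1 x i ^ 2) + 1 / (2 * α) * (B ^ 2 * e1 x ^ 2) := by
      refine youngG hSA (by positivity) (by positivity) (by positivity) hab ?_
      calc (-(e1 x * (Rv x ⬝ᵥ grad m e1 x))) ^ 2
          = e1 x ^ 2 * (Rv x ⬝ᵥ grad m e1 x) ^ 2 := by ring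
        _ ≤ e1 x ^ 2 * (B ^ 2 * ∑ i, grad m e1 x i ^ 2) :=
            mul_le_mul_of_nonneg_left hra (sq_nonneg _)
        _ = (∑ i, grad m e1 x i ^ 2) * (B ^ 2 * e1 x ^ 2) := by ring
    have ht4 : -(e2 x * (Rv x ⬝ᵥ grad m e2 x))
        ≤ α / 2 * (∑ i, grad m e2 x i ^ 2) + 1 / (2 * α) * (B ^ 2 * e2 x ^ 2) := by
      refine youngG hSB (by positivity) (by positivity) (by positivity) hab ?_
      calc (-(e2 x * (Rv x ⬝ᵥ grad m e2 x))) ^ 2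
          = e2 x ^ 2 * (Rv x ⬝ᵥ grad m e2 x) ^ 2 := by ring
        _ ≤ e2 x ^ 2 * (B ^ 2 * ∑ i, grad m e2 x i ^ 2) :=
            mul_le_mul_of_nonneg_left hrb (sq_nonneg _)
        _ = (∑ i, grad m e2 x i ^ 2) * (B ^ 2 * e2 x ^ 2) := by ring
    have hq : (α / 2 + B ^ 2 / (2 * α)) * (e1 x ^ 2 + e2 x ^ 2)
        ≤ q1 x * (e1 x ^ 2 + e2 x ^ 2) :=
      mul_le_mul_of_nonneg_right hq1x (by positivity)
    ring_nf at ht3 ht4 hq ⊢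
    linarith [hPa, hPb, ht3, ht4, hq]
  -- boundedness
  have hbdd : aForm m Ω P Rv q1 q2 e1 e2 z1 z2
      ≤ α / 8 * (∫ x in Ω, (e1 x ^ 2 + e2 x ^ 2
          + (∑ i, grad m e1 x i ^ 2) + ∑ i, grad m e2 x i ^ 2))
        + K * ∫ x in Ω, (z1 x ^ 2 + z2 x ^ 2
          + (∑ i, grad m z1 x i ^ 2) + ∑ i, grad m z2 x i ^ 2) := by
    simp only [aForm]
    have iPRez : Integrable (fun x => (grad m z1 x ⬝ᵥ (P x).mulVec (grad m e1 x)
        + grad m z2 x ⬝ᵥ (P x).mulVec (grad m e2 x))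
        + (z1 x * (Rv x ⬝ᵥ grad m e1 x) + z2 x * (Rv x ⬝ᵥ grad m e2 x)))
        (volume.restrict Ω) := iPez.add iRez
    have iFullz : Integrable (fun x => (grad m z1 x ⬝ᵥ (P x).mulVec (grad m e1 x)
        + grad m z2 x ⬝ᵥ (P x).mulVec (grad m e2 x))
        + (z1 x * (Rv x ⬝ᵥ grad m e1 x) + z2 x * (Rv x ⬝ᵥ grad m e2 x))
        + (q1 x * e1 x * z1 x + q2 x * e2 x * z1 x
          + q1 x * e2 x * z2 x - q2 x * e1 x * z2 x))
        (volume.restrict Ω) := iPRez.add iQez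
    rw [← integral_add iPez iRez, ← integral_add iPRez iQez]
    have hstep : (∫ x in Ω, ((grad m z1 x ⬝ᵥ (P x).mulVec (grad m e1 x)
          + grad m z2 x ⬝ᵥ (P x).mulVec (grad m e2 x))
        + (z1 x * (Rv x ⬝ᵥ grad m e1 x) + z2 x * (Rv x ⬝ᵥ grad m e2 x))
        + (q1 x * e1 x * z1 x + q2 x * e2 x * z1 x
          + q1 x * e2 x * z2 x - q2 x * e1 x * z2 x)))
        ≤ ∫ x in Ω, (α / 8 * (e1 x ^ 2 + e2 x ^ 2
            + (∑ i, grad m e1 x i ^ 2) + ∑ i, grad m e2 x i ^ 2)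
          + K * (z1 x ^ 2 + z2 x ^ 2
            + (∑ i, grad m z1 x i ^ 2) + ∑ i, grad m z2 x i ^ 2)) := by
      refine integral_mono_ae iFullz
        ((iEe.const_mul _).add (iEz.const_mul _)) ?_
      filter_upwards [hPbd, hRbd, hq1b, hq2b] with x hPx hRx hq1x hq2x
      have hM0 : 0 ≤ M := (abs_nonneg _).trans (hPx ⟨0, hm⟩ ⟨0, hm⟩)
      have hQ10 : 0 ≤ Q1 := (abs_nonneg _).trans hq1x
      have hQ20 : 0 ≤ Q2 := (abs_nonneg _).trans hq2x
      have hSA : (0:ℝ) ≤ ∑ i, grad m e1 x i ^ 2 := Finset.sum_nonneg fun i _ => sq_nonneg _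
      have hSB : (0:ℝ) ≤ ∑ i, grad m e2 x i ^ 2 := Finset.sum_nonneg fun i _ => sq_nonneg _
      have hSC : (0:ℝ) ≤ ∑ i, grad m z1 x i ^ 2 := Finset.sum_nonneg fun i _ => sq_nonneg _
      have hSD : (0:ℝ) ≤ ∑ i, grad m z2 x i ^ 2 := Finset.sum_nonneg fun i _ => sq_nonneg _
      have hab : (1:ℝ) ≤ 4 * (α / 16) * (4 / α) := by
        have h : (4:ℝ) * (α / 16) * (4 / α) = 1 := by
          field_simp
          ring
        linarith
      have hra : (Rv x ⬝ᵥ grad m e1 x) ^ 2 ≤ B ^ 2 * ∑ i, grad m e1 x i ^ 2 := by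
        rw [hB2]; exact dotR_sq hRx
      have hrb : (Rv x ⬝ᵥ grad m e2 x) ^ 2 ≤ B ^ 2 * ∑ i, grad m e2 x i ^ 2 := by
        rw [hB2]; exact dotR_sq hRx
      have t1 : grad m z1 x ⬝ᵥ (P x).mulVec (grad m e1 x)
          ≤ α / 16 * (∑ i, grad m e1 x i ^ 2)
            + 4 / α * (M ^ 2 * (m:ℝ) ^ 2 * ∑ i, grad m z1 x i ^ 2) := by
        refine youngG hSA (by positivity) (by positivity) (by positivity) hab ?_
        nlinarith [dotP_bound hM0 hPx (grad m z1 x) (grad m e1 x)]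
      have t2 : grad m z2 x ⬝ᵥ (P x).mulVec (grad m e2 x)
          ≤ α / 16 * (∑ i, grad m e2 x i ^ 2)
            + 4 / α * (M ^ 2 * (m:ℝ) ^ 2 * ∑ i, grad m z2 x i ^ 2) := by
        refine youngG hSB (by positivity) (by positivity) (by positivity) hab ?_
        nlinarith [dotP_bound hM0 hPx (grad m z2 x) (grad m e2 x)]
      have t3 : z1 x * (Rv x ⬝ᵥ grad m e1 x)
          ≤ α / 16 * (∑ i, grad m e1 x i ^ 2) + 4 / α * (B ^ 2 * z1 x ^ 2) := by
        refine youngG hSA (by positivity) (by positivity) (by positivity) hab ?_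
        nlinarith [mul_le_mul_of_nonneg_left hra (sq_nonneg (z1 x))]
      have t4 : z2 x * (Rv x ⬝ᵥ grad m e2 x)
          ≤ α / 16 * (∑ i, grad m e2 x i ^ 2) + 4 / α * (B ^ 2 * z2 x ^ 2) := by
        refine youngG hSB (by positivity) (by positivity) (by positivity) hab ?_
        nlinarith [mul_le_mul_of_nonneg_left hrb (sq_nonneg (z2 x))]
      have t5 : q1 x * e1 x * z1 x
          ≤ α / 16 * e1 x ^ 2 + 4 / α * (Q1 ^ 2 * z1 x ^ 2) := by
        refine youngG (sq_nonneg _) (by positivity) (by positivity) (by positivity) hab ?_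
        exact sq_coef hq1x
      have t6 : q2 x * e2 x * z1 x
          ≤ α / 16 * e2 x ^ 2 + 4 / α * (Q2 ^ 2 * z1 x ^ 2) := by
        refine youngG (sq_nonneg _) (by positivity) (by positivity) (by positivity) hab ?_
        exact sq_coef hq2x
      have t7 : q1 x * e2 x * z2 x
          ≤ α / 16 * e2 x ^ 2 + 4 / α * (Q1 ^ 2 * z2 x ^ 2) := by
        refine youngG (sq_nonneg _) (by positivity) (by positivity) (by positivity) hab ?_
        exact sq_coef hq1x
      have t8 : -(q2 x * e1 x * z2 x)
          ≤ α / 16 * e1 x ^ 2 + 4 / α * (Q2 ^ 2 * z2 x ^ 2) := by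
        refine youngG (sq_nonneg _) (by positivity) (by positivity) (by positivity) hab ?_
        nlinarith [sq_coef (u := e1 x) (v := z2 x) hq2x]
      have h0 : 0 ≤ 4 / α * (M ^ 2 * (m:ℝ) ^ 2 * (z1 x ^ 2 + z2 x ^ 2)
          + (B ^ 2 + Q1 ^ 2 + Q2 ^ 2)
            * ((∑ i, grad m z1 x i ^ 2) + ∑ i, grad m z2 x i ^ 2)) := by positivity
      have hKE : K * (z1 x ^ 2 + z2 x ^ 2
            + (∑ i, grad m z1 x i ^ 2) + ∑ i, grad m z2 x i ^ 2)
          = (4 / α * (M ^ 2 * (m:ℝ) ^ 2 * ∑ i, grad m z1 x i ^ 2)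
            + 4 / α * (M ^ 2 * (m:ℝ) ^ 2 * ∑ i, grad m z2 x i ^ 2)
            + 4 / α * (B ^ 2 * z1 x ^ 2) + 4 / α * (B ^ 2 * z2 x ^ 2)
            + 4 / α * (Q1 ^ 2 * z1 x ^ 2) + 4 / α * (Q2 ^ 2 * z1 x ^ 2)
            + 4 / α * (Q1 ^ 2 * z2 x ^ 2) + 4 / α * (Q2 ^ 2 * z2 x ^ 2))
          + 4 / α * (M ^ 2 * (m:ℝ) ^ 2 * (z1 x ^ 2 + z2 x ^ 2)
            + (B ^ 2 + Q1 ^ 2 + Q2 ^ 2)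
              * ((∑ i, grad m z1 x i ^ 2) + ∑ i, grad m z2 x i ^ 2)) := by
        rw [hK]; ring
      linarith [t1, t2, t3, t4, t5, t6, t7, t8, h0, hKE]
    calc _ ≤ _ := hstep
      _ = α / 8 * (∫ x in Ω, (e1 x ^ 2 + e2 x ^ 2
            + (∑ i, grad m e1 x i ^ 2) + ∑ i, grad m e2 x i ^ 2))
          + K * ∫ x in Ω, (z1 x ^ 2 + z2 x ^ 2
            + (∑ i, grad m z1 x i ^ 2) + ∑ i, grad m z2 x i ^ 2) := by
        rw [integral_add (iEe.const_mul _) (iEz.const_mul _), integral_const_mul,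
          integral_const_mul]
  -- nonnegativity of energy integrals
  have hIz0 : 0 ≤ ∫ x in Ω, (z1 x ^ 2 + z2 x ^ 2
      + (∑ i, grad m z1 x i ^ 2) + ∑ i, grad m z2 x i ^ 2) :=
    integral_nonneg fun x => by positivity
  -- norm identities
  have hnorm : ∀ u : (Fin m → ℝ) → ℝ, (normH1 m Ω u) ^ 2
      = (∫ x in Ω, u x ^ 2) + ∫ x in Ω, ∑ i, grad m u x i ^ 2 := by
    intro u
    have h0 : 0 ≤ ∫ x in Ω, u x ^ 2 := integral_nonneg fun x => sq_nonneg _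
    have h1 : 0 ≤ ∫ x in Ω, ∑ i, grad m u x i ^ 2 :=
      integral_nonneg fun x => by positivity
    simp only [normH1, normL2, semiH1]
    rw [Real.sq_sqrt (by positivity), Real.sq_sqrt h0, Real.sq_sqrt h1]
  have hEsplit : ∀ a1 a2 : (Fin m → ℝ) → ℝ,
      ContDiff ℝ 1 a1 → HasCompactSupport a1 → ContDiff ℝ 1 a2 → HasCompactSupport a2 →
      (∫ x in Ω, (a1 x ^ 2 + a2 x ^ 2
        + (∑ i, grad m a1 x i ^ 2) + ∑ i, grad m a2 x i ^ 2))
      = (∫ x in Ω, a1 x ^ 2) + (∫ x in Ω, a2 x ^ 2)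
        + (∫ x in Ω, ∑ i, grad m a1 x i ^ 2) + ∫ x in Ω, ∑ i, grad m a2 x i ^ 2 := by
    intro a1 a2 ha1c ha1s ha2c ha2s
    have i1 := (bsq _ (bdry a1 ha1c ha1s)).integrable
    have i2 := (bsq _ (bdry a2 ha2c ha2s)).integrable
    have i3 := (bgr2 _ ha1c ha1s).integrable
    have i4 := (bgr2 _ ha2c ha2s).integrable
    have i12 : Integrable (fun x => a1 x ^ 2 + a2 x ^ 2) (volume.restrict Ω) := i1.add i2
    have i123 : Integrable (fun x => a1 x ^ 2 + a2 x ^ 2 + ∑ i, grad m a1 x i ^ 2)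
        (volume.restrict Ω) := i12.add i3
    rw [integral_add i123 i4, integral_add i12 i3, integral_add i1 i2]
  rw [hnorm e1, hnorm e2, hnorm z1, hnorm z2]
  have hEe := hEsplit e1 e2 he1c he1s he2c he2s
  have hEz := hEsplit z1 z2 hz1c hz1s hz2c hz2s
  have hmain : (3 * α / 8) * (∫ x in Ω, (e1 x ^ 2 + e2 x ^ 2
      + (∑ i, grad m e1 x i ^ 2) + ∑ i, grad m e2 x i ^ 2))
      ≤ K * ∫ x in Ω, (z1 x ^ 2 + z2 x ^ 2
        + (∑ i, grad m z1 x i ^ 2) + ∑ i, grad m z2 x i ^ 2) := by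
    rw [hEq] at hcoer
    linarith [hcoer, hbdd]
  have hfin : (∫ x in Ω, (e1 x ^ 2 + e2 x ^ 2
      + (∑ i, grad m e1 x i ^ 2) + ∑ i, grad m e2 x i ^ 2))
      ≤ 8 / (3 * α) * K * ∫ x in Ω, (z1 x ^ 2 + z2 x ^ 2
        + (∑ i, grad m z1 x i ^ 2) + ∑ i, grad m z2 x i ^ 2) := by
    have hpos : (0:ℝ) < 8 / (3 * α) := by positivity
    have h' := mul_le_mul_of_nonneg_left hmain hpos.le
    have hid : 8 / (3 * α) * ((3 * α / 8) * (∫ x in Ω, (e1 x ^ 2 + e2 x ^ 2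
        + (∑ i, grad m e1 x i ^ 2) + ∑ i, grad m e2 x i ^ 2)))
        = ∫ x in Ω, (e1 x ^ 2 + e2 x ^ 2
          + (∑ i, grad m e1 x i ^ 2) + ∑ i, grad m e2 x i ^ 2) := by
      field_simp
    rw [hid] at h'
    linarith [h']
  rw [hEe, hEz] at hfin
  linarith [hfin]
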